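/- arXiv:2504.10305 — 2 statements merged into one kernel-verified Lean document; each statement's English description precedes it below -/
import Mathlib

section
/- Let G be any group, k ≥ 1 and ℓ ≥ 2, and let a ∈ γ_k(G), b ∈ γ_ℓ(G). Then (a,b)⁻² · (a,b²) ∈ γ_{k+ℓ+2}(G), where (x,y) = x⁻¹y⁻¹xy. (This expresses the compatibility [x, h(y)] = h([x,y]) of the squaring operation h with the Lie bracket of the associated graded Lie algebra.) -/
/-- `γ_k(G)` for `k ≥ 1`, the lower central series in its classical indexing. -/
def gamma (G : Type*) [Group G] (k : ℕ) : Subgroup G := (⊤ : Subgroup G).lowerCentralSeries (k - 1)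

/-- The group commutator `(x, y) = x⁻¹y⁻¹xy`. -/
def grpComm {G : Type*} [Group G] (x y : G) : G := x⁻¹ * y⁻¹ * x * y

open scoped commutatorElement in
lemma grpComm_eq_commutatorElement {G : Type*} [Group G] (x y : G) :
    grpComm x y = ⁅x⁻¹, y⁻¹⁆ := by
  simp only [grpComm, commutatorElement_def]
  group

/-- Three subgroups lemma, `≤ N` version for `N` normal. -/
lemma three_subgroups_le {G : Type*} [Group G] {H₁ H₂ H₃ N : Subgroup G} [N.Normal]
    (h1 : ⁅⁅H₂, H₃⁆, H₁⁆ ≤ N) (h2 : ⁅⁅H₃, H₁⁆, H₂⁆ ≤ N) : ⁅⁅H₁, H₂⁆, H₃⁆ ≤ N := by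
  let π := QuotientGroup.mk' N
  have key : ∀ {A B C : Subgroup G}, ⁅⁅A, B⁆, C⁆ ≤ N ↔
      ⁅⁅A.map π, B.map π⁆, C.map π⁆ = ⊥ := by
    intro A B C
    rw [← Subgroup.map_commutator, ← Subgroup.map_commutator, Subgroup.map_eq_bot_iff,
      QuotientGroup.ker_mk']
  rw [key]
  exact Subgroup.commutator_commutator_eq_bot_of_rotate (key.mp h1) (key.mp h2)

lemma lcs_succ' {G : Type*} [Group G] (n : ℕ) :
    (⊤ : Subgroup G).lowerCentralSeries (n + 1) = ⁅(⊤ : Subgroup G).lowerCentralSeries n, ⊤⁆ := rfl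

lemma lcs_comm_le {G : Type*} [Group G] (m : ℕ) : ∀ n : ℕ,
    ⁅(⊤ : Subgroup G).lowerCentralSeries n, (⊤ : Subgroup G).lowerCentralSeries m⁆ ≤ (⊤ : Subgroup G).lowerCentralSeries (n + m + 1) := by
  induction m with
  | zero =>
    intro n
    rw [Subgroup.lowerCentralSeries_zero]
    exact le_of_eq (lcs_succ' (G := G) n).symm
  | succ m ih =>
    intro n
    rw [Subgroup.commutator_comm, lcs_succ']
    apply three_subgroups_le
    · -- ⁅⁅⊤, lcs n⁆, lcs m⁆ ≤ lcs (n + m + 2)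
      rw [Subgroup.commutator_comm (⊤ : Subgroup G), ← lcs_succ']
      have := ih (n + 1)
      calc ⁅(⊤ : Subgroup G).lowerCentralSeries (n + 1), (⊤ : Subgroup G).lowerCentralSeries m⁆
          ≤ (⊤ : Subgroup G).lowerCentralSeries (n + 1 + m + 1) := ih (n + 1)
        _ = (⊤ : Subgroup G).lowerCentralSeries (n + (m + 1) + 1) := by ring_nf
    · -- ⁅⁅lcs n, lcs m⁆, ⊤⁆ ≤ lcs (n + m + 2)
      calc ⁅⁅(⊤ : Subgroup G).lowerCentralSeries n, (⊤ : Subgroup G).lowerCentralSeries m⁆, (⊤ : Subgroup G)⁆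
          ≤ ⁅(⊤ : Subgroup G).lowerCentralSeries (n + m + 1), (⊤ : Subgroup G)⁆ :=
            Subgroup.commutator_mono (ih n) le_rfl
        _ = (⊤ : Subgroup G).lowerCentralSeries (n + m + 2) := (lcs_succ' (n + m + 1)).symm
        _ = (⊤ : Subgroup G).lowerCentralSeries (n + (m + 1) + 1) := by ring_nf

open scoped commutatorElement in
lemma grpComm_mem_lcs {G : Type*} [Group G] {n m : ℕ} {x y : G}
    (hx : x ∈ (⊤ : Subgroup G).lowerCentralSeries n) (hy : y ∈ (⊤ : Subgroup G).lowerCentralSeries m) :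
    grpComm x y ∈ (⊤ : Subgroup G).lowerCentralSeries (n + m + 1) := by
  rw [grpComm_eq_commutatorElement]
  exact lcs_comm_le m n (Subgroup.commutator_mem_commutator (inv_mem hx) (inv_mem hy))

/-- Let `G` be any group, `k ≥ 1` and `ℓ ≥ 2`, and let
`a ∈ γ_k(G)`, `b ∈ γ_ℓ(G)`.  Then `(a,b)⁻² · (a,b²) ∈ γ_{k+ℓ+2}(G)`, where
`(x,y) = x⁻¹y⁻¹xy`.  (Compatibility `[x, h(y)] = h([x,y])` of the squaring
operation with the Lie bracket of the associated graded Lie algebra.) -/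
theorem squaring_bracket_compat {G : Type*} [Group G] (k ℓ : ℕ)
    (hk : 1 ≤ k) (hl : 2 ≤ ℓ) (a b : G)
    (ha : a ∈ gamma G k) (hb : b ∈ gamma G ℓ) :
    (grpComm a b)⁻¹ ^ 2 * grpComm a (b ^ 2) ∈ gamma G (k + ℓ + 2) := by
  have key : (grpComm a b)⁻¹ ^ 2 * grpComm a (b ^ 2) = grpComm (grpComm a b) b := by
    simp only [grpComm, pow_two, mul_inv_rev, inv_inv]
    simp only [mul_assoc, inv_mul_cancel_left, mul_inv_cancel_left]
  rw [key]
  have hc : grpComm a b ∈ (⊤ : Subgroup G).lowerCentralSeries ((k - 1) + (ℓ - 1) + 1) := grpComm_mem_lcs ha hb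
  have h2 : grpComm (grpComm a b) b ∈
      (⊤ : Subgroup G).lowerCentralSeries (((k - 1) + (ℓ - 1) + 1) + (ℓ - 1) + 1) := grpComm_mem_lcs hc hb
  have hle : k + ℓ + 2 - 1 ≤ ((k - 1) + (ℓ - 1) + 1) + (ℓ - 1) + 1 := by omega
  exact Subgroup.lowerCentralSeries_antitone _ hle h2
end

section
/- Let L be a Lie algebra over a commutative ring with unit, let p_1,…,p_n ∈ L, and for a subset I = {t_1 < t_2 < … < t_s} ⊆ [n] and x ∈ L write c_p(I, x) := ⁅p_{t_1}, ⁅p_{t_2}, … ⁅p_{t_s}, x⁆…⁆⁆, with c_p(∅, x) = x. Then for all x, y ∈ L and every subset I ⊆ [n]: c_p(I, ⁅x,y⁆) = Σ ⁅c_p(A, x), c_p(B, y)⁆, where the sum ranges over all ordered pairs (A, B) of disjoint subsets with A ∪ B = I. -/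
/-- For `p : Fin n → L` and `I = {t₁ < t₂ < … < t_s} ⊆ [n]`, the nested
commutator `c_p(I, x) = ⁅p t₁, ⁅p t₂, … ⁅p t_s, x⁆…⁆⁆`, with `c_p(∅, x) = x`. -/
def cNest {R : Type*} {L : Type*} [CommRing R] [LieRing L] [LieAlgebra R L]
    {n : ℕ} (p : Fin n → L) (I : Finset (Fin n)) (x : L) : L :=
  (I.sort (· ≤ ·)).foldr (fun t acc => ⁅p t, acc⁆) x

lemma cNest_insert {R : Type*} {L : Type*} [CommRing R] [LieRing L] [LieAlgebra R L]
    {n : ℕ} (p : Fin n → L) {t : Fin n} {A : Finset (Fin n)}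
    (h₁ : ∀ b ∈ A, t ≤ b) (h₂ : t ∉ A) (x : L) :
    cNest (R := R) p (insert t A) x = ⁅p t, cNest (R := R) p A x⁆ := by
  unfold cNest
  rw [Finset.sort_insert _ h₁ h₂, List.foldr_cons]

/-- Let `L` be a Lie algebra over a commutative ring, let
`p₁,…,p_n ∈ L`.  Then for all `x, y ∈ L` and every subset `I ⊆ [n]`,
`c_p(I, ⁅x,y⁆) = Σ ⁅c_p(A, x), c_p(B, y)⁆`, the sum ranging over all ordered
pairs `(A, B)` of disjoint subsets with `A ∪ B = I` (i.e. `A ⊆ I`, `B = I \ A`). -/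
theorem cNest_lie {R : Type*} {L : Type*} [CommRing R] [LieRing L] [LieAlgebra R L]
    {n : ℕ} (p : Fin n → L) (I : Finset (Fin n)) (x y : L) :
    cNest (R := R) p I ⁅x, y⁆ =
      ∑ A ∈ I.powerset, ⁅cNest (R := R) p A x, cNest (R := R) p (I \ A) y⁆ := by
  induction I using Finset.strongInduction with
  | _ I ih =>
    rcases I.eq_empty_or_nonempty with rfl | hne
    · simp [cNest]
    · set t := I.min' hne with ht
      set J := I.erase t with hJ
      have htI : t ∈ I := I.min'_mem hne
      have htJ : t ∉ J := Finset.notMem_erase t I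
      have h₁ : ∀ b ∈ J, t ≤ b := fun b hb => I.min'_le b (Finset.mem_of_mem_erase hb)
      have hII : I = insert t J := (Finset.insert_erase htI).symm
      have hJI : J ⊂ I := Finset.erase_ssubset htI
      have hsum : ∀ (s : Finset (Finset (Fin n))) (f : Finset (Fin n) → L) (z : L),
          ⁅z, ∑ A ∈ s, f A⁆ = ∑ A ∈ s, ⁅z, f A⁆ := by
        intro s f z
        induction s using Finset.induction with
        | empty => simp
        | @insert a s h ih2 => rw [Finset.sum_insert h, Finset.sum_insert h, lie_add, ih2]
      rw [hII, cNest_insert (R := R) p h₁ htJ, ih J hJI, hsum,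
        Finset.sum_powerset_insert htJ]
      rw [← Finset.sum_add_distrib]
      apply Finset.sum_congr rfl
      intro A hA
      rw [Finset.mem_powerset] at hA
      have htA : t ∉ A := fun h => htJ (hA h)
      have e1 : insert t J \ A = insert t (J \ A) := by
        ext b
        simp only [Finset.mem_sdiff, Finset.mem_insert]
        constructor
        · rintro ⟨rfl | hb, hbA⟩
          · exact Or.inl rfl
          · exact Or.inr ⟨hb, hbA⟩
        · rintro (rfl | ⟨hb, hbA⟩)
          · exact ⟨Or.inl rfl, htA⟩
          · exact ⟨Or.inr hb, hbA⟩
      have e2 : insert t J \ insert t A = J \ A := by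
        ext b
        simp only [Finset.mem_sdiff, Finset.mem_insert, not_or]
        constructor
        · rintro ⟨rfl | hb, hbt, hbA⟩
          · exact absurd rfl hbt
          · exact ⟨hb, hbA⟩
        · rintro ⟨hb, hbA⟩
          exact ⟨Or.inr hb, fun h => htJ (h ▸ hb), hbA⟩
      have h₁' : ∀ b ∈ J \ A, t ≤ b := fun b hb => h₁ b ((Finset.mem_sdiff.mp hb).1)
      have htJA : t ∉ J \ A := fun h => htJ ((Finset.mem_sdiff.mp h).1)
      rw [e1, e2, cNest_insert (R := R) p h₁' htJA,
        cNest_insert (R := R) p (fun b hb => h₁ b (hA hb)) htA, leibniz_lie]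
      rw [add_comm]
end
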